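/- arXiv:math-ph/0702023 — 2 statements merged into one kernel-verified Lean document; each statement's English description precedes it below -/
import Mathlib

section
/- For every $p \geq 3$, $\delta > 0$, and $g_p \in L^2((0,\delta), r\,dr)$, one has $\int_0^\delta r^{-2p-4}\left(\int_0^r t^{p+3/2} g_p(t)\,dt\right)^2 dr \leq \frac{4}{(2p+7)(2p-1)} \int_0^\delta r\, |g_p(r)|^2\, dr$. -/
open MeasureTheory Set

set_option maxHeartbeats 1000000 in
/-- Weighted Hardy-type inequality (STATEMENT 0). -/
theorem stmt_0 (p : ℝ) (hp : 3 ≤ p) (δ : ℝ) (hδ : 0 < δ)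
    (g : ℝ → ℝ) (hmeas : Measurable g)
    (hint : IntegrableOn (fun r => r * (g r) ^ 2) (Ioo 0 δ)) :
    ∫ r in Ioo 0 δ, r ^ (-2 * p - 4) * (∫ t in Ioo 0 r, t ^ (p + 3 / 2) * g t) ^ 2
      ≤ 4 / ((2 * p + 7) * (2 * p - 1)) * ∫ r in Ioo 0 δ, r * (g r) ^ 2 := by
  obtain ⟨q, hqdef⟩ : ∃ q : ℝ, q = p + 1/2 := ⟨_, rfl⟩
  have hq : (7:ℝ)/2 ≤ q := by rw [hqdef]; linarith
  set f : ℝ → ℝ := fun t => t ^ (p + 3/2) * g t with hfdef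
  set A : ℝ → ℝ := fun r => ∫ t in Ioo 0 r, f t with hAdef
  obtain ⟨C, hCdef⟩ : ∃ C : ℝ, C = 4 / ((2*p+7)*(2*p-1)) := ⟨_, rfl⟩
  have hq1 : (0:ℝ) < q - 1 := by linarith
  have hq3 : (0:ℝ) < q + 3 := by linarith
  have hD : (0:ℝ) < (q-1)*(q+3) := mul_pos hq1 hq3
  have hCq : C = 1 / ((q-1)*(q+3)) := by
    rw [hCdef, show (2*p+7)*(2*p-1) = 4*((q-1)*(q+3)) by rw [hqdef]; ring,
      div_eq_div_iff (by positivity) hD.ne']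
    ring
  have hCpos : 0 < C := by rw [hCq]; exact one_div_pos.mpr hD
  -- measurability
  have hrm : ∀ c : ℝ, Measurable fun t : ℝ => t ^ c := fun c => by measurability
  have hGmeas : Measurable fun t : ℝ => t ^ q * g t ^ 2 := (hrm q).mul (hmeas.pow_const 2)
  have hfmeas : Measurable f := by rw [hfdef]; measurability
  -- squaring rpow helper
  have hsq : ∀ x : ℝ, 0 ≤ x → ∀ a : ℝ, (x ^ a) ^ 2 = x ^ (2*a) := by
    intro x hx a
    rw [← Real.rpow_natCast (x ^ a) 2, ← Real.rpow_mul hx]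
    norm_num [mul_comm]
  have hstep : ∀ x : ℝ, 0 < x → ∀ a : ℝ, x ^ a = x ^ (a-1) * x := by
    intro x hx a
    rw [← Real.rpow_add_one hx.ne' (a-1)]
    norm_num
  -- integrability of G
  have hGint : IntegrableOn (fun t => t ^ q * g t ^ 2) (Ioo 0 δ) := by
    refine Integrable.mono' (hint.const_mul (δ ^ (q-1))) hGmeas.aestronglyMeasurable ?_
    filter_upwards [ae_restrict_mem measurableSet_Ioo] with t ht
    have ht0 : 0 < t := ht.1
    rw [Real.norm_eq_abs, abs_of_nonneg (mul_nonneg (Real.rpow_nonneg ht0.le _) (sq_nonneg _))]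
    calc t ^ q * g t ^ 2 = t ^ (q-1) * (t * g t ^ 2) := by rw [hstep t ht0 q]; ring
      _ ≤ δ ^ (q-1) * (t * g t ^ 2) :=
          mul_le_mul_of_nonneg_right (Real.rpow_le_rpow ht0.le ht.2.le (by linarith))
            (mul_nonneg ht0.le (sq_nonneg _))
  -- integrability of f
  have hfint : IntegrableOn f (Ioo 0 δ) := by
    have hb : IntegrableOn (fun t => (δ ^ (q+1) * t + t ^ q * g t ^ 2)/2) (Ioo 0 δ) := by
      apply Integrable.div_const
      refine Integrable.add ?_ hGint
      have h : IntegrableOn (fun t : ℝ => δ ^ (q+1) * t) (Icc 0 δ) :=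
        (continuous_const.mul continuous_id).integrableOn_Icc
      exact h.mono_set Ioo_subset_Icc_self
    refine Integrable.mono' hb hfmeas.aestronglyMeasurable ?_
    filter_upwards [ae_restrict_mem measurableSet_Ioo] with t ht
    have ht0 : 0 < t := ht.1
    have e1 : ‖f t‖ = t ^ ((q+2)/2) * (t ^ (q/2) * |g t|) := by
      rw [hfdef, Real.norm_eq_abs, abs_mul, abs_of_nonneg (Real.rpow_nonneg ht0.le _),
        show p + 3/2 = (q+2)/2 + q/2 by rw [hqdef]; ring, Real.rpow_add ht0]
      ring
    rw [e1]
    have h2 := two_mul_le_add_sq (t ^ ((q+2)/2)) (t ^ (q/2) * |g t|)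
    have e2 : (t ^ ((q+2)/2)) ^ 2 = t ^ (q+2) := by rw [hsq t ht0.le]; ring_nf
    have e3 : (t ^ (q/2) * |g t|) ^ 2 = t ^ q * g t ^ 2 := by
      rw [mul_pow, hsq t ht0.le, sq_abs]; ring_nf
    have e4 : t ^ (q+2) ≤ δ ^ (q+1) * t := by
      rw [show t ^ (q+2) = t ^ (q+1) * t by rw [hstep t ht0 (q+2)]; ring_nf]
      exact mul_le_mul_of_nonneg_right (Real.rpow_le_rpow ht0.le ht.2.le (by linarith)) ht0.le
    nlinarith [Real.rpow_nonneg ht0.le ((q+2)/2),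
      mul_nonneg (Real.rpow_nonneg ht0.le (q/2)) (abs_nonneg (g t))]
  -- continuity of A on Icc 0 δ
  have hAcont : ContinuousOn A (Icc 0 δ) := by
    have hIcc : IntegrableOn f (Icc 0 δ) := by
      rwa [integrableOn_Icc_iff_integrableOn_Ioo]
    have h := intervalIntegral.continuousOn_primitive (f := f) (a := 0) (b := δ) (μ := volume) hIcc
    refine h.congr fun x _ => ?_
    rw [hAdef]
    exact (integral_Ioc_eq_integral_Ioo).symm
  -- a.e. measurability of LHS integrand
  have hmeasA : AEStronglyMeasurable
      (fun r => r ^ (-2*p-4) * (A r) ^ 2) (volume.restrict (Ioo 0 δ)) := by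
    have hc : ContinuousOn (fun r : ℝ => r ^ (-2*p-4) * (A r) ^ 2) (Ioo 0 δ) := by
      refine ContinuousOn.mul ?_ ((hAcont.mono Ioo_subset_Icc_self).pow 2)
      exact continuousOn_id.rpow_const fun x hx => Or.inl (ne_of_gt hx.1)
    exact hc.aestronglyMeasurable measurableSet_Ioo
  have hnn : ∀ᵐ r ∂(volume.restrict (Ioo 0 δ)), 0 ≤ r ^ (-2*p-4) * (A r) ^ 2 := by
    filter_upwards [ae_restrict_mem measurableSet_Ioo] with r hr
    exact mul_nonneg (Real.rpow_nonneg hr.1.le _) (sq_nonneg _)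
  -- rewrite LHS as toReal of lintegral
  have hLHS : ∫ r in Ioo 0 δ, r ^ (-2*p-4) * (A r) ^ 2
      = (∫⁻ r in Ioo 0 δ, ENNReal.ofReal (r ^ (-2*p-4) * (A r) ^ 2)).toReal :=
    integral_eq_lintegral_of_nonneg_ae hnn hmeasA
  have h2cast : ∀ x : ENNReal, x ^ (2:ℝ) = x ^ (2:ℕ) := fun x => by
    rw [← ENNReal.rpow_natCast]; norm_num
  -- value of the pure power integral
  have hJ1 : ∀ r ∈ Ioo (0:ℝ) δ, (∫⁻ t in Ioo 0 r, ENNReal.ofReal (t ^ (q+2)))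
      = ENNReal.ofReal (r ^ (q+3) / (q+3)) := by
    intro r hr
    have hint2 : IntegrableOn (fun t : ℝ => t ^ (q+2)) (Ioo 0 r) := by
      have h := intervalIntegral.intervalIntegrable_rpow' (a := 0) (b := r) (r := q+2)
        (by linarith)
      rw [intervalIntegrable_iff_integrableOn_Ioc_of_le hr.1.le] at h
      exact h.mono_set Ioo_subset_Ioc_self
    rw [← ofReal_integral_eq_lintegral_ofReal hint2 ?_]
    · congr 1
      rw [← integral_Ioc_eq_integral_Ioo, ← intervalIntegral.integral_of_le hr.1.le,
        integral_rpow (Or.inl (by linarith)),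
        show q+2+1 = q+3 by ring, Real.zero_rpow (by linarith), sub_zero]
    · filter_upwards [ae_restrict_mem measurableSet_Ioo] with t ht
      exact Real.rpow_nonneg ht.1.le _
  -- inner weight integral bound
  have hK : ∀ t ∈ Ioo (0:ℝ) δ, (∫⁻ r in Ioo t δ, ENNReal.ofReal (r ^ (-q) / (q+3)))
      ≤ ENNReal.ofReal (C * t ^ (1-q)) := by
    intro t ht
    have h0 : (0:ℝ) ∉ Set.uIcc t δ := by
      rw [Set.mem_uIcc]
      push_neg
      constructor <;> intro h <;> linarith [ht.1, ht.2]
    have hti : IntegrableOn (fun r : ℝ => r ^ (-q) / (q+3)) (Ioo t δ) := by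
      have h := (intervalIntegral.intervalIntegrable_rpow (μ := volume) (a := t) (b := δ)
        (r := -q) (Or.inr h0)).div_const (q+3)
      rw [intervalIntegrable_iff_integrableOn_Ioc_of_le ht.2.le] at h
      exact h.mono_set Ioo_subset_Ioc_self
    rw [← ofReal_integral_eq_lintegral_ofReal hti ?_]
    · apply ENNReal.ofReal_le_ofReal
      rw [← integral_Ioc_eq_integral_Ioo, ← intervalIntegral.integral_of_le ht.2.le,
        intervalIntegral.integral_div, integral_rpow (Or.inr ⟨by linarith, h0⟩)]
      have hY : 0 ≤ δ ^ (-q+1) := Real.rpow_nonneg hδ.le _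
      have e : (δ ^ (-q+1) - t ^ (-q+1)) / (-q+1) / (q+3)
          = (t ^ (-q+1) - δ ^ (-q+1)) / ((q-1)*(q+3)) := by
        rw [div_div, div_eq_div_iff (by nlinarith) (by nlinarith)]
        ring
      rw [e, hCq, show (1:ℝ)-q = -q+1 by ring, one_div, inv_mul_eq_div]
      exact (div_le_div_iff_of_pos_right hD).mpr (by linarith)
    · filter_upwards [ae_restrict_mem measurableSet_Ioo] with r hrr
      exact div_nonneg (Real.rpow_nonneg (le_trans ht.1.le hrr.1.le) _) (by linarith)
  -- pointwise Cauchy-Schwarz bound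
  have hCS : ∀ r ∈ Ioo (0:ℝ) δ, ENNReal.ofReal (r ^ (-2*p-4) * (A r) ^ 2)
      ≤ ENNReal.ofReal (r ^ (-q) / (q+3)) * ∫⁻ t in Ioo 0 r, ENNReal.ofReal (t ^ q * g t ^ 2) := by
    intro r hr
    have hr0 : 0 < r := hr.1
    have hsub : Ioo (0:ℝ) r ⊆ Ioo 0 δ := Ioo_subset_Ioo le_rfl hr.2.le
    have hmφ : Measurable fun t : ℝ => ENNReal.ofReal (t ^ ((q+2)/2)) :=
      ENNReal.measurable_ofReal.comp (hrm _)
    have hmψ : Measurable fun t : ℝ => ENNReal.ofReal (t ^ (q/2) * |g t|) :=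
      ENNReal.measurable_ofReal.comp ((hrm _).mul hmeas.abs)
    have h1 : ENNReal.ofReal |A r| ≤ ∫⁻ t in Ioo 0 r,
        ENNReal.ofReal (t ^ ((q+2)/2)) * ENNReal.ofReal (t ^ (q/2) * |g t|) := by
      have habs : |A r| ≤ ∫ t in Ioo 0 r, |f t| := by
        calc |A r| = ‖∫ t in Ioo 0 r, f t‖ := (Real.norm_eq_abs _).symm
          _ ≤ ∫ t in Ioo 0 r, ‖f t‖ := norm_integral_le_integral_norm f
          _ = ∫ t in Ioo 0 r, |f t| := by simp [Real.norm_eq_abs]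
      calc ENNReal.ofReal |A r| ≤ ENNReal.ofReal (∫ t in Ioo 0 r, |f t|) :=
            ENNReal.ofReal_le_ofReal habs
        _ = ∫⁻ t in Ioo 0 r, ENNReal.ofReal |f t| :=
            ofReal_integral_eq_lintegral_ofReal (hfint.mono_set hsub).abs
              (ae_of_all _ fun t => abs_nonneg _)
        _ = ∫⁻ t in Ioo 0 r,
            ENNReal.ofReal (t ^ ((q+2)/2)) * ENNReal.ofReal (t ^ (q/2) * |g t|) := by
            refine setLIntegral_congr_fun measurableSet_Ioo (fun t ht => ?_)
            rw [hfdef]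
            rw [abs_mul, abs_of_nonneg (Real.rpow_nonneg ht.1.le _),
              show p + 3/2 = (q+2)/2 + q/2 by rw [hqdef]; ring, Real.rpow_add ht.1,
              mul_assoc, ENNReal.ofReal_mul (Real.rpow_nonneg ht.1.le _)]
    have h2 : (∫⁻ t in Ioo 0 r,
          ENNReal.ofReal (t ^ ((q+2)/2)) * ENNReal.ofReal (t ^ (q/2) * |g t|))
        ≤ (∫⁻ t in Ioo 0 r, ENNReal.ofReal (t ^ ((q+2)/2)) ^ (2:ℝ)) ^ (1/(2:ℝ))
          * (∫⁻ t in Ioo 0 r, ENNReal.ofReal (t ^ (q/2) * |g t|) ^ (2:ℝ)) ^ (1/(2:ℝ)) := by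
      simpa using ENNReal.lintegral_mul_le_Lp_mul_Lq (volume.restrict (Ioo 0 r))
        (Real.HolderConjugate.two_two : Real.HolderConjugate 2 2)
        hmφ.aemeasurable hmψ.aemeasurable
    have h3 : (∫⁻ t in Ioo 0 r, ENNReal.ofReal (t ^ ((q+2)/2)) ^ (2:ℝ))
        = ENNReal.ofReal (r ^ (q+3) / (q+3)) := by
      rw [← hJ1 r hr]
      refine setLIntegral_congr_fun measurableSet_Ioo (fun t ht => ?_)
      rw [h2cast, ← ENNReal.ofReal_pow (Real.rpow_nonneg ht.1.le _),
        hsq t ht.1.le, show 2*((q+2)/2) = q+2 by ring]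
    have h4 : (∫⁻ t in Ioo 0 r, ENNReal.ofReal (t ^ (q/2) * |g t|) ^ (2:ℝ))
        = ∫⁻ t in Ioo 0 r, ENNReal.ofReal (t ^ q * g t ^ 2) := by
      refine setLIntegral_congr_fun measurableSet_Ioo (fun t ht => ?_)
      rw [h2cast, ← ENNReal.ofReal_pow (mul_nonneg (Real.rpow_nonneg ht.1.le _) (abs_nonneg _)),
        mul_pow, hsq t ht.1.le, sq_abs, show 2*(q/2) = q by ring]
    calc ENNReal.ofReal (r ^ (-2*p-4) * (A r) ^ 2)
        = ENNReal.ofReal (r ^ (-2*p-4)) * ENNReal.ofReal |A r| ^ (2:ℝ) := by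
          rw [h2cast, ← ENNReal.ofReal_pow (abs_nonneg _), sq_abs,
            ← ENNReal.ofReal_mul (Real.rpow_nonneg hr0.le _)]
      _ ≤ ENNReal.ofReal (r ^ (-2*p-4)) *
          (ENNReal.ofReal (r ^ (q+3) / (q+3)) * ∫⁻ t in Ioo 0 r, ENNReal.ofReal (t ^ q * g t ^ 2)) := by
          apply mul_le_mul_right
          calc ENNReal.ofReal |A r| ^ (2:ℝ)
              ≤ ((∫⁻ t in Ioo 0 r, ENNReal.ofReal (t ^ ((q+2)/2)) ^ (2:ℝ)) ^ (1/(2:ℝ))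
                * (∫⁻ t in Ioo 0 r, ENNReal.ofReal (t ^ (q/2) * |g t|) ^ (2:ℝ)) ^ (1/(2:ℝ))) ^ (2:ℝ) :=
                ENNReal.rpow_le_rpow (le_trans h1 h2) (by norm_num)
            _ = (∫⁻ t in Ioo 0 r, ENNReal.ofReal (t ^ ((q+2)/2)) ^ (2:ℝ))
                * (∫⁻ t in Ioo 0 r, ENNReal.ofReal (t ^ (q/2) * |g t|) ^ (2:ℝ)) := by
                rw [ENNReal.mul_rpow_of_nonneg _ _ (by norm_num : (0:ℝ) ≤ 2),
                  ← ENNReal.rpow_mul, ← ENNReal.rpow_mul]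
                norm_num
            _ = ENNReal.ofReal (r ^ (q+3) / (q+3)) * ∫⁻ t in Ioo 0 r, ENNReal.ofReal (t ^ q * g t ^ 2) := by
                rw [h3, h4]
      _ = ENNReal.ofReal (r ^ (-q) / (q+3)) * ∫⁻ t in Ioo 0 r, ENNReal.ofReal (t ^ q * g t ^ 2) := by
          rw [← mul_assoc, ← ENNReal.ofReal_mul (Real.rpow_nonneg hr0.le _)]
          congr 2
          rw [← mul_div_assoc, ← Real.rpow_add hr0, show -2*p-4+(q+3) = -q by rw [hqdef]; ring]
  -- the product-space function for Tonelli
  set F : ℝ × ℝ → ENNReal := fun x =>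
    if 0 < x.2 ∧ x.2 < x.1 then
      ENNReal.ofReal (x.1 ^ (-q) / (q+3)) * ENNReal.ofReal (x.2 ^ q * g x.2 ^ 2)
    else 0 with hFdef
  have hFmeas : Measurable F := by
    rw [hFdef]
    refine Measurable.ite ?_ ?_ measurable_const
    · exact (measurableSet_lt measurable_const measurable_snd).inter
        (measurableSet_lt measurable_snd measurable_fst)
    · exact (ENNReal.measurable_ofReal.comp
        (((hrm (-q)).comp measurable_fst).div_const (q+3))).mul
        (ENNReal.measurable_ofReal.comp (hGmeas.comp measurable_snd))
  have hswap : (∫⁻ r in Ioo 0 δ, ∫⁻ t in Ioo 0 δ, F (r, t))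
      = ∫⁻ t in Ioo 0 δ, ∫⁻ r in Ioo 0 δ, F (r, t) :=
    lintegral_lintegral_swap (hFmeas.aemeasurable)
  have step1 : ∀ r ∈ Ioo (0:ℝ) δ, (∫⁻ t in Ioo 0 δ, F (r, t))
      = ENNReal.ofReal (r ^ (-q) / (q+3)) * ∫⁻ t in Ioo 0 r, ENNReal.ofReal (t ^ q * g t ^ 2) := by
    intro r hr
    have h1 : (∫⁻ t in Ioo 0 δ, F (r, t)) = ∫⁻ t in Ioo 0 δ, (Ioo (0:ℝ) r).indicator
        (fun t => ENNReal.ofReal (r ^ (-q) / (q+3)) * ENNReal.ofReal (t ^ q * g t ^ 2)) t := by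
      refine setLIntegral_congr_fun measurableSet_Ioo (fun t ht => ?_)
      by_cases h : t ∈ Ioo (0:ℝ) r
      · rw [indicator_of_mem h, hFdef]; exact if_pos ⟨h.1, h.2⟩
      · rw [indicator_of_notMem h, hFdef]
        exact if_neg fun hc => h ⟨hc.1, hc.2⟩
    rw [h1, lintegral_indicator measurableSet_Ioo _, Measure.restrict_restrict measurableSet_Ioo,
      inter_eq_left.mpr (Ioo_subset_Ioo le_rfl hr.2.le),
      lintegral_const_mul _ (show Measurable fun t : ℝ => ENNReal.ofReal (t ^ q * g t ^ 2) from ENNReal.measurable_ofReal.comp hGmeas)]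
  have step2 : ∀ t ∈ Ioo (0:ℝ) δ, (∫⁻ r in Ioo 0 δ, F (r, t))
      = ENNReal.ofReal (t ^ q * g t ^ 2) * ∫⁻ r in Ioo t δ, ENNReal.ofReal (r ^ (-q) / (q+3)) := by
    intro t ht
    have h1 : (∫⁻ r in Ioo 0 δ, F (r, t)) = ∫⁻ r in Ioo 0 δ, (Ioo t δ).indicator
        (fun r => ENNReal.ofReal (r ^ (-q) / (q+3)) * ENNReal.ofReal (t ^ q * g t ^ 2)) r := by
      refine setLIntegral_congr_fun measurableSet_Ioo (fun r hr => ?_)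
      by_cases h : r ∈ Ioo t δ
      · rw [indicator_of_mem h, hFdef]; exact if_pos ⟨ht.1, h.1⟩
      · rw [indicator_of_notMem h, hFdef]
        exact if_neg fun hc => h ⟨hc.2, hr.2⟩
    rw [h1, lintegral_indicator measurableSet_Ioo _, Measure.restrict_restrict measurableSet_Ioo,
      inter_eq_left.mpr (Ioo_subset_Ioo ht.1.le le_rfl),
      lintegral_mul_const _ (show Measurable fun r : ℝ => ENNReal.ofReal (r ^ (-q) / (q+3)) from ENNReal.measurable_ofReal.comp ((hrm (-q)).div_const (q+3))),
      mul_comm]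
  -- the key chained estimate
  have hkey : (∫⁻ r in Ioo 0 δ, ENNReal.ofReal (r ^ (-2*p-4) * (A r) ^ 2))
      ≤ ENNReal.ofReal (C * ∫ r in Ioo 0 δ, r * g r ^ 2) := by
    calc (∫⁻ r in Ioo 0 δ, ENNReal.ofReal (r ^ (-2*p-4) * (A r) ^ 2))
        ≤ ∫⁻ r in Ioo 0 δ, ENNReal.ofReal (r ^ (-q) / (q+3))
            * ∫⁻ t in Ioo 0 r, ENNReal.ofReal (t ^ q * g t ^ 2) := by
          refine lintegral_mono_ae ?_
          filter_upwards [ae_restrict_mem measurableSet_Ioo] with r hr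
          exact hCS r hr
      _ = ∫⁻ r in Ioo 0 δ, ∫⁻ t in Ioo 0 δ, F (r, t) :=
          (setLIntegral_congr_fun measurableSet_Ioo
            (fun r hr => (step1 r hr).symm))
      _ = ∫⁻ t in Ioo 0 δ, ∫⁻ r in Ioo 0 δ, F (r, t) := hswap
      _ = ∫⁻ t in Ioo 0 δ, ENNReal.ofReal (t ^ q * g t ^ 2)
            * ∫⁻ r in Ioo t δ, ENNReal.ofReal (r ^ (-q) / (q+3)) :=
          (setLIntegral_congr_fun measurableSet_Ioo (fun t ht => step2 t ht))
      _ ≤ ∫⁻ t in Ioo 0 δ, ENNReal.ofReal (t ^ q * g t ^ 2) * ENNReal.ofReal (C * t ^ (1-q)) := by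
          refine lintegral_mono_ae ?_
          filter_upwards [ae_restrict_mem measurableSet_Ioo] with t ht
          exact mul_le_mul_right (hK t ht) _
      _ = ∫⁻ t in Ioo 0 δ, ENNReal.ofReal (C * (t * g t ^ 2)) := by
          refine setLIntegral_congr_fun measurableSet_Ioo (fun t ht => ?_)
          rw [← ENNReal.ofReal_mul (mul_nonneg (Real.rpow_nonneg ht.1.le _) (sq_nonneg _))]
          congr 1
          rw [show t ^ q * g t ^ 2 * (C * t ^ (1-q)) = C * (t ^ q * t ^ (1-q) * g t ^ 2) by ring,
            ← Real.rpow_add ht.1, show q + (1-q) = 1 by ring, Real.rpow_one]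
      _ = ENNReal.ofReal (∫ t in Ioo 0 δ, C * (t * g t ^ 2)) := by
          refine (ofReal_integral_eq_lintegral_ofReal (hint.const_mul C) ?_).symm
          filter_upwards [ae_restrict_mem measurableSet_Ioo] with t ht
          exact mul_nonneg hCpos.le (mul_nonneg ht.1.le (sq_nonneg _))
      _ = ENNReal.ofReal (C * ∫ t in Ioo 0 δ, t * g t ^ 2) := by rw [integral_const_mul]
  -- final assembly
  have hR : 0 ≤ ∫ r in Ioo 0 δ, r * g r ^ 2 :=
    setIntegral_nonneg measurableSet_Ioo fun r hr => mul_nonneg hr.1.le (sq_nonneg _)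
  have hgoal : ∫ r in Ioo 0 δ, r ^ (-2 * p - 4) * (∫ t in Ioo 0 r, t ^ (p + 3 / 2) * g t) ^ 2
      = ∫ r in Ioo 0 δ, r ^ (-2*p-4) * (A r) ^ 2 := rfl
  rw [hgoal, hLHS]
  calc (∫⁻ r in Ioo 0 δ, ENNReal.ofReal (r ^ (-2*p-4) * (A r) ^ 2)).toReal
      ≤ (ENNReal.ofReal (C * ∫ r in Ioo 0 δ, r * g r ^ 2)).toReal :=
        ENNReal.toReal_mono ENNReal.ofReal_ne_top hkey
    _ = C * ∫ r in Ioo 0 δ, r * g r ^ 2 :=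
        ENNReal.toReal_ofReal (mul_nonneg hCpos.le hR)
    _ = 4 / ((2 * p + 7) * (2 * p - 1)) * ∫ r in Ioo 0 δ, r * g r ^ 2 := by rw [hCdef]
end

section
/- Let $N > 0$, $\delta > 0$, and let $g_0 \in L^2((0,\delta), t\,dt)$. Define $\alpha := \int_0^\delta \sqrt{t}\, \frac{\sinh N(t - \delta)}{\sinh N\delta}\, g_0(t)\, dt$. Then $|\alpha|^2 \leq \frac{C}{N} \int_0^\delta t\, |g_0(t)|^2\, dt$, where $C = \sup_{t>0} \frac{\sinh 2t - 2t}{4\sinh^2 t} < \infty$ is independent of $N$, $\delta$, and $g_0$. -/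
open MeasureTheory Set Real

/-- Cauchy–Schwarz for set integrals of real functions. -/
lemma cs_integral {f g : ℝ → ℝ} {s : Set ℝ}
    (hf2 : IntegrableOn (fun t => f t ^ 2) s)
    (hg2 : IntegrableOn (fun t => g t ^ 2) s)
    (hfg : IntegrableOn (fun t => f t * g t) s) :
    (∫ t in s, f t * g t) ^ 2 ≤ (∫ t in s, f t ^ 2) * (∫ t in s, g t ^ 2) := by
  set A := ∫ t in s, f t ^ 2 with hA
  set B := ∫ t in s, f t * g t with hB
  set Cc := ∫ t in s, g t ^ 2 with hCc
  have key : ∀ x : ℝ, 0 ≤ A * (x * x) + (2 * B) * x + Cc := by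
    intro x
    have h0 : 0 ≤ ∫ t in s, (x * f t + g t) ^ 2 :=
      integral_nonneg fun t => sq_nonneg _
    have hexp : ∫ t in s, (x * f t + g t) ^ 2
        = A * (x * x) + (2 * B) * x + Cc := by
      have heq : (fun t => (x * f t + g t) ^ 2)
          = fun t => (x * x) * f t ^ 2 + (2 * x) * (f t * g t) + g t ^ 2 := by
        funext t; ring
      have i1 : IntegrableOn (fun t => (x * x) * f t ^ 2 + (2 * x) * (f t * g t)) s := by
        exact (hf2.const_mul _).add (hfg.const_mul _)
      have i2 : IntegrableOn (fun t => (x * x) * f t ^ 2) s := hf2.const_mul _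
      have i3 : IntegrableOn (fun t => (2 * x) * (f t * g t)) s := hfg.const_mul _
      rw [heq, integral_add i1 hg2, integral_add i2 i3,
        integral_const_mul, integral_const_mul]
      rw [← hA, ← hB, ← hCc]; ring
    linarith [hexp ▸ h0]
  have hd := discrim_le_zero key
  rw [discrim] at hd
  nlinarith [hd]

/-- Bound on the edge coefficient of the N-th Fourier mode (STATEMENT 6). -/
theorem stmt_6 (N δ : ℝ) (hN : 0 < N) (hδ : 0 < δ) (g0 : ℝ → ℝ) (hmeas : Measurable g0)
    (hint : IntegrableOn (fun t => t * (g0 t) ^ 2) (Ioo 0 δ)) :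
    BddAbove {y : ℝ | ∃ t > 0, y = (Real.sinh (2 * t) - 2 * t) / (4 * Real.sinh t ^ 2)} ∧
    (∫ t in Ioo 0 δ, Real.sqrt t * (Real.sinh (N * (t - δ)) / Real.sinh (N * δ)) * g0 t) ^ 2
      ≤ (sSup {y : ℝ | ∃ t > 0, y = (Real.sinh (2 * t) - 2 * t) / (4 * Real.sinh t ^ 2)}) / N
          * ∫ t in Ioo 0 δ, t * (g0 t) ^ 2 := by
  set S := {y : ℝ | ∃ t > 0, y = (Real.sinh (2 * t) - 2 * t) / (4 * Real.sinh t ^ 2)} with hS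
  -- boundedness of the set
  have hbdd : BddAbove S := by
    refine ⟨1 / 2, ?_⟩
    rintro y ⟨t, ht, rfl⟩
    have hst : 0 < Real.sinh t := Real.sinh_pos_iff.mpr ht
    rw [div_le_iff₀ (by positivity)]
    nlinarith [Real.add_one_le_exp (-(2 * t)), Real.cosh_sub_sinh (2 * t),
      Real.cosh_two_mul t, Real.cosh_sq t]
  refine ⟨hbdd, ?_⟩
  have hNδ : 0 < N * δ := mul_pos hN hδ
  have hs : 0 < Real.sinh (N * δ) := Real.sinh_pos_iff.mpr hNδ
  set h : ℝ → ℝ := fun t => Real.sinh (N * (t - δ)) / Real.sinh (N * δ) with hh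
  set g : ℝ → ℝ := fun t => Real.sqrt t * g0 t with hg
  have hcont : Continuous h := by
    exact (Real.continuous_sinh.comp (by continuity)).div_const _
  -- bound |h t| ≤ 1 on Ioo 0 δ
  have hb : ∀ t ∈ Ioo (0 : ℝ) δ, |h t| ≤ 1 := by
    rintro t ⟨ht0, htδ⟩
    rw [hh]
    rw [abs_div, abs_of_pos hs, div_le_one hs]
    have h1 : N * (t - δ) ≤ 0 := by nlinarith
    have h2 : |Real.sinh (N * (t - δ))| = Real.sinh (N * (δ - t)) := by
      rw [abs_of_nonpos (Real.sinh_nonpos_iff.mpr h1), ← Real.sinh_neg]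
      ring_nf
    rw [h2]
    exact Real.sinh_le_sinh.mpr (by nlinarith)
  -- integrability facts
  have hf2 : IntegrableOn (fun t => h t ^ 2) (Ioo 0 δ) :=
    ((hcont.pow 2).integrableOn_Ioc).mono_set Ioo_subset_Ioc_self
  have hg2 : IntegrableOn (fun t => g t ^ 2) (Ioo 0 δ) := by
    refine hint.congr_fun ?_ measurableSet_Ioo
    rintro t ⟨ht0, _⟩
    simp only [hg, mul_pow, Real.sq_sqrt ht0.le]
  have hgm : AEStronglyMeasurable g (volume.restrict (Ioo 0 δ)) :=
    (Real.continuous_sqrt.measurable.mul hmeas).aestronglyMeasurable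
  have hg1 : IntegrableOn g (Ioo 0 δ) := by
    have hb1 : IntegrableOn (fun t => (t * g0 t ^ 2 + 1) / 2) (Ioo 0 δ) := by
      exact (hint.add (integrableOn_const measure_Ioo_lt_top.ne)).div_const 2
    refine Integrable.mono' hb1 hgm ?_
    filter_upwards [ae_restrict_mem measurableSet_Ioo] with t ht
    obtain ⟨ht0, _⟩ := ht
    have hsq : (Real.sqrt t * |g0 t|) ^ 2 = t * g0 t ^ 2 := by
      rw [mul_pow, Real.sq_sqrt ht0.le, sq_abs]
    have habs : ‖g t‖ = Real.sqrt t * |g0 t| := by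
      rw [hg, Real.norm_eq_abs, abs_mul, abs_of_nonneg (Real.sqrt_nonneg t)]
    rw [habs]
    nlinarith [sq_nonneg (Real.sqrt t * |g0 t| - 1)]
  have hfg : IntegrableOn (fun t => h t * g t) (Ioo 0 δ) := by
    refine Integrable.mono' hg1.abs (hcont.aestronglyMeasurable.mul hgm) ?_
    filter_upwards [ae_restrict_mem measurableSet_Ioo] with t ht
    rw [Real.norm_eq_abs, abs_mul]
    calc |h t| * |g t| ≤ 1 * |g t| :=
          mul_le_mul_of_nonneg_right (hb t ht) (abs_nonneg _)
      _ = |g t| := one_mul _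
  -- Cauchy-Schwarz
  have hCS : (∫ t in Ioo 0 δ, h t * g t) ^ 2
      ≤ (∫ t in Ioo 0 δ, h t ^ 2) * (∫ t in Ioo 0 δ, g t ^ 2) :=
    cs_integral hf2 hg2 hfg
  -- identify the integrand
  have hintg : (∫ t in Ioo 0 δ,
      Real.sqrt t * (Real.sinh (N * (t - δ)) / Real.sinh (N * δ)) * g0 t)
      = ∫ t in Ioo 0 δ, h t * g t := by
    apply setIntegral_congr_fun measurableSet_Ioo
    intro t _
    simp only [hh, hg]; ring
  -- compute ∫ h²
  set fNδ : ℝ := (Real.sinh (2 * (N * δ)) - 2 * (N * δ)) / (4 * Real.sinh (N * δ) ^ 2)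
    with hfNδ
  have hA : (∫ t in Ioo 0 δ, h t ^ 2) = fNδ / N := by
    have h1 : (∫ t in Ioo 0 δ, h t ^ 2) = ∫ t in (0 : ℝ)..δ, h t ^ 2 := by
      rw [intervalIntegral.integral_of_le hδ.le, MeasureTheory.integral_Ioc_eq_integral_Ioo]
    rw [h1]
    have hderiv : ∀ t ∈ Set.uIcc (0 : ℝ) δ, HasDerivAt
        (fun t => (Real.sinh (2 * N * (t - δ)) / (4 * N) - t / 2) / Real.sinh (N * δ) ^ 2)
        (h t ^ 2) t := by
      intro t _
      have h1 : HasDerivAt (fun t : ℝ => 2 * N * (t - δ)) (2 * N) t := by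
        simpa using ((hasDerivAt_id t).sub_const δ).const_mul (2 * N)
      have h2 : HasDerivAt (fun t : ℝ => Real.sinh (2 * N * (t - δ)))
          (Real.cosh (2 * N * (t - δ)) * (2 * N)) t :=
        (Real.hasDerivAt_sinh _).comp t h1
      have h3 := ((h2.div_const (4 * N)).sub ((hasDerivAt_id t).div_const 2)).div_const
        (Real.sinh (N * δ) ^ 2)
      convert h3 using 1
      case e'_4 => rfl
      case e'_5 => rfl
      case e'_8 => rfl
      rw [hh]
      have e1 : 2 * N * (t - δ) = 2 * (N * (t - δ)) := by ring
      rw [e1, Real.cosh_two_mul, Real.cosh_sq]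
      field_simp
      ring
    rw [intervalIntegral.integral_eq_sub_of_hasDerivAt hderiv
      ((hcont.pow 2).intervalIntegrable 0 δ)]
    rw [hfNδ]
    have e2 : (2 : ℝ) * N * (0 - δ) = -(2 * (N * δ)) := by ring
    have e3 : (2 : ℝ) * N * (δ - δ) = 0 := by ring
    rw [e2, e3, Real.sinh_zero, Real.sinh_neg]
    field_simp
    ring
  have hmem : fNδ ∈ S := ⟨N * δ, hNδ, rfl⟩
  have hle : fNδ ≤ sSup S := le_csSup hbdd hmem
  have hCc_eq : (∫ t in Ioo 0 δ, g t ^ 2) = ∫ t in Ioo 0 δ, t * g0 t ^ 2 := by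
    apply setIntegral_congr_fun measurableSet_Ioo
    rintro t ⟨ht0, _⟩
    simp only [hg, mul_pow, Real.sq_sqrt ht0.le]
  have hCc_nonneg : 0 ≤ ∫ t in Ioo 0 δ, g t ^ 2 :=
    integral_nonneg fun t => sq_nonneg _
  calc (∫ t in Ioo 0 δ,
      Real.sqrt t * (Real.sinh (N * (t - δ)) / Real.sinh (N * δ)) * g0 t) ^ 2
      = (∫ t in Ioo 0 δ, h t * g t) ^ 2 := by rw [hintg]
    _ ≤ (∫ t in Ioo 0 δ, h t ^ 2) * (∫ t in Ioo 0 δ, g t ^ 2) := hCS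
    _ = fNδ / N * (∫ t in Ioo 0 δ, g t ^ 2) := by rw [hA]
    _ ≤ sSup S / N * (∫ t in Ioo 0 δ, g t ^ 2) := by
        apply mul_le_mul_of_nonneg_right _ hCc_nonneg
        gcongr
    _ = sSup S / N * ∫ t in Ioo 0 δ, t * g0 t ^ 2 := by rw [hCc_eq]
end
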